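/- arXiv:2505.07031 — 11 statements merged into one kernel-verified Lean document; each statement's English description precedes it below -/
import Mathlib

section
/- Let α ∈ (0,1] and let a, b, c, d be real numbers with a ≠ b and c ≠ d. Then |( |a−b|^(1+α)/(a−b) ) − ( |c−d|^(1+α)/(c−d) )| ≤ 8·|a−b−c+d|^α. -/
private lemma subadd_rpow {α : ℝ} (hα0 : 0 < α) (hα1 : α ≤ 1) {u v : ℝ}
    (hu : 0 ≤ u) (hv : 0 ≤ v) : (u + v) ^ α ≤ u ^ α + v ^ α := by
  lift u to NNReal using hu
  lift v to NNReal using hv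
  have := NNReal.rpow_add_le_add_rpow u v hα0.le hα1
  exact_mod_cast this

private lemma abs_rpow_sub_rpow {α : ℝ} (hα0 : 0 < α) (hα1 : α ≤ 1) {u v : ℝ}
    (hu : 0 ≤ u) (hv : 0 ≤ v) : |u ^ α - v ^ α| ≤ |u - v| ^ α := by
  wlog h : v ≤ u generalizing u v
  · rw [abs_sub_comm, abs_sub_comm u v]
    exact this hv hu (le_of_not_ge h)
  have h1 : u ^ α - v ^ α ≤ (u - v) ^ α := by
    have := subadd_rpow hα0 hα1 (sub_nonneg.2 h) hv
    rw [sub_add_cancel] at this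
    linarith
  have h2 : 0 ≤ u ^ α - v ^ α := by
    have := Real.rpow_le_rpow hv h hα0.le
    linarith
  rw [abs_of_nonneg h2, abs_of_nonneg (sub_nonneg.2 h)]
  exact h1

private lemma key {α : ℝ} (hα0 : 0 < α) (hα1 : α ≤ 1) {x y : ℝ}
    (hx : x ≠ 0) (hy : y ≠ 0) :
    |(|x| ^ (1 + α)) / x - (|y| ^ (1 + α)) / y| ≤ 8 * |x - y| ^ α := by
  have hxabs : 0 < |x| := abs_pos.2 hx
  have hyabs : 0 < |y| := abs_pos.2 hy
  have hpow : ∀ z : ℝ, z ≠ 0 → (|z| ^ (1 + α)) / z = (|z| ^ α) * (z / |z|) := by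
    intro z hz
    have : |z| ^ (1 + α) = |z| ^ (1 : ℝ) * |z| ^ α := Real.rpow_add (abs_pos.2 hz) 1 α
    rw [this, Real.rpow_one]
    field_simp
    linear_combination abs_mul_abs_self z
  rw [hpow x hx, hpow y hy]
  have hnn : 0 ≤ |x - y| ^ α := Real.rpow_nonneg (abs_nonneg _) α
  rcases lt_or_gt_of_ne hx with hxneg | hxpos <;>
    rcases lt_or_gt_of_ne hy with hyneg | hypos
  · -- x < 0, y < 0
    rw [abs_of_neg hxneg, abs_of_neg hyneg]
    have hx' : x / -x = -1 := by field_simp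
    have hy' : y / -y = -1 := by field_simp
    rw [hx', hy']
    have := abs_rpow_sub_rpow hα0 hα1 (neg_nonneg.2 hxneg.le) (neg_nonneg.2 hyneg.le)
    calc |(-x) ^ α * (-1) - (-y) ^ α * (-1)| = |(-x) ^ α - (-y) ^ α| := by
          rw [show (-x) ^ α * (-1) - (-y) ^ α * (-1) = -((-x) ^ α - (-y) ^ α) by ring,
            abs_neg]
      _ ≤ |(-x) - (-y)| ^ α := abs_rpow_sub_rpow hα0 hα1 (neg_nonneg.2 hxneg.le)
          (neg_nonneg.2 hyneg.le)
      _ = |x - y| ^ α := by rw [show -x - -y = -(x - y) by ring, abs_neg]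
      _ ≤ 8 * |x - y| ^ α := by linarith
  · -- x < 0, y > 0
    rw [abs_of_neg hxneg, abs_of_pos hypos]
    have hx' : x / -x = -1 := by field_simp
    have hy' : y / y = 1 := by field_simp
    rw [hx', hy']
    have hxy : 0 < y - x := by linarith
    have h1 : (-x) ^ α ≤ (y - x) ^ α :=
      Real.rpow_le_rpow (neg_nonneg.2 hxneg.le) (by linarith) hα0.le
    have h2 : y ^ α ≤ (y - x) ^ α :=
      Real.rpow_le_rpow hypos.le (by linarith) hα0.le
    have hxnn : 0 ≤ (-x) ^ α := Real.rpow_nonneg (neg_nonneg.2 hxneg.le) α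
    have hynn : 0 ≤ y ^ α := Real.rpow_nonneg hypos.le α
    have habs : |x - y| ^ α = (y - x) ^ α := by
      rw [abs_sub_comm, abs_of_pos hxy]
    calc |(-x) ^ α * (-1) - y ^ α * 1| = (-x) ^ α + y ^ α := by
          rw [abs_of_nonpos (by linarith)]; ring
      _ ≤ 2 * (y - x) ^ α := by linarith
      _ ≤ 8 * |x - y| ^ α := by rw [habs]; nlinarith [Real.rpow_nonneg hxy.le α]
  · -- x > 0, y < 0
    rw [abs_of_pos hxpos, abs_of_neg hyneg]
    have hx' : x / x = 1 := by field_simp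
    have hy' : y / -y = -1 := by field_simp
    rw [hx', hy']
    have hxy : 0 < x - y := by linarith
    have h1 : x ^ α ≤ (x - y) ^ α :=
      Real.rpow_le_rpow hxpos.le (by linarith) hα0.le
    have h2 : (-y) ^ α ≤ (x - y) ^ α :=
      Real.rpow_le_rpow (neg_nonneg.2 hyneg.le) (by linarith) hα0.le
    have hxnn : 0 ≤ x ^ α := Real.rpow_nonneg hxpos.le α
    have hynn : 0 ≤ (-y) ^ α := Real.rpow_nonneg (neg_nonneg.2 hyneg.le) α
    have habs : |x - y| ^ α = (x - y) ^ α := by rw [abs_of_pos hxy]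
    calc |x ^ α * 1 - (-y) ^ α * (-1)| = x ^ α + (-y) ^ α := by
          rw [abs_of_nonneg (by linarith)]; ring
      _ ≤ 2 * (x - y) ^ α := by linarith
      _ ≤ 8 * |x - y| ^ α := by rw [habs]; nlinarith [Real.rpow_nonneg hxy.le α]
  · -- x > 0, y > 0
    rw [abs_of_pos hxpos, abs_of_pos hypos]
    have hx' : x / x = 1 := by field_simp
    have hy' : y / y = 1 := by field_simp
    rw [hx', hy']
    simp only [mul_one]
    calc |x ^ α - y ^ α| ≤ |x - y| ^ α :=
          abs_rpow_sub_rpow hα0 hα1 hxpos.le hypos.le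
      _ ≤ 8 * |x - y| ^ α := by linarith

theorem stmt2 (α a b c d : ℝ) (hα0 : 0 < α) (hα1 : α ≤ 1) (hab : a ≠ b) (hcd : c ≠ d) :
    |(|a - b| ^ (1 + α)) / (a - b) - (|c - d| ^ (1 + α)) / (c - d)|
      ≤ 8 * |a - b - c + d| ^ α := by
  have h := key hα0 hα1 (sub_ne_zero.2 hab) (sub_ne_zero.2 hcd)
  have : a - b - c + d = (a - b) - (c - d) := by ring
  rw [this]
  exact h
end

section
/- Let α ∈ (0,1] and let f : ℝ → ℝ be locally little Hölder continuous with exponent α, i.e., for every r > 0 and every ε > 0 there exists δ > 0 such that |f(u)−f(w)| ≤ ε·|u−w|^α for all u, w ∈ [−r, r] with |u−w| ≤ δ. Then f is quasi continuously differentiable with exponent α, i.e., for every r > 0 and ε > 0 there exists δ > 0 such that for all a,b,c,d ∈ [−r,r] with a ≠ b, c ≠ d, |a−c| ≤ δ, |b−d| ≤ δ, one has |((f(a)−f(b))(a−b))/|a−b|^(1+α) − ((f(c)−f(d))(c−d))/|c−d|^(1+α)| ≤ ε. -/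
theorem stmt3 (α : ℝ) (hα0 : 0 < α) (hα1 : α ≤ 1) (f : ℝ → ℝ)
    (hf : ∀ r > (0 : ℝ), ∀ ε > (0 : ℝ), ∃ δ > (0 : ℝ), ∀ u w : ℝ,
      |u| ≤ r → |w| ≤ r → |u - w| ≤ δ → |f u - f w| ≤ ε * |u - w| ^ α) :
    ∀ r > (0 : ℝ), ∀ ε > (0 : ℝ), ∃ δ > (0 : ℝ), ∀ a b c d : ℝ,
      |a| ≤ r → |b| ≤ r → |c| ≤ r → |d| ≤ r → a ≠ b → c ≠ d →
      |a - c| ≤ δ → |b - d| ≤ δ →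
      |((f a - f b) * (a - b)) / |a - b| ^ (1 + α)
        - ((f c - f d) * (c - d)) / |c - d| ^ (1 + α)| ≤ ε := by
  -- f is continuous
  have hcont : Continuous f := by
    rw [Metric.continuous_iff]
    intro x ε hε
    obtain ⟨δ, hδ, h⟩ := hf (|x| + 1) (by positivity) (ε / 2) (by positivity)
    refine ⟨min δ 1, by positivity, fun y hy => ?_⟩
    rw [Real.dist_eq] at hy ⊢
    have hy1 : |y - x| ≤ 1 := le_trans hy.le (min_le_right _ _)
    have hyδ : |y - x| ≤ δ := le_trans hy.le (min_le_left _ _)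
    have hyb : |y| ≤ |x| + 1 := by
      calc |y| = |(y - x) + x| := by ring_nf
        _ ≤ |y - x| + |x| := abs_add_le _ _
        _ ≤ |x| + 1 := by linarith
    have hxb : |x| ≤ |x| + 1 := by linarith
    have hpow : |y - x| ^ α ≤ 1 :=
      Real.rpow_le_one (abs_nonneg _) hy1 hα0.le
    calc |f y - f x| ≤ ε / 2 * |y - x| ^ α := h y x hyb hxb hyδ
      _ ≤ ε / 2 * 1 := by
          apply mul_le_mul_of_nonneg_left hpow (by positivity)
      _ < ε := by linarith
  intro r hr ε hε
  obtain ⟨δ₀, hδ₀, h0⟩ := hf r hr (ε / 4) (by positivity)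
  -- bound for the quotient when |a - b| small
  have hsmall : ∀ a b : ℝ, |a| ≤ r → |b| ≤ r → a ≠ b → |a - b| ≤ δ₀ →
      |((f a - f b) * (a - b)) / |a - b| ^ (1 + α)| ≤ ε / 4 := by
    intro a b ha hb hab habδ
    have ht : (0 : ℝ) < |a - b| := abs_pos.mpr (sub_ne_zero.mpr hab)
    have hden : |a - b| ^ (1 + α) = |a - b| * |a - b| ^ α := by
      rw [Real.rpow_add ht, Real.rpow_one]
    have hdenpos : (0 : ℝ) < |a - b| ^ (1 + α) := Real.rpow_pos_of_pos ht _
    have hpowpos : (0 : ℝ) < |a - b| ^ α := Real.rpow_pos_of_pos ht _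
    rw [abs_div, abs_of_pos hdenpos, div_le_iff₀ hdenpos]
    have hnum : |(f a - f b) * (a - b)| ≤ (ε / 4 * |a - b| ^ α) * |a - b| := by
      rw [abs_mul]
      exact mul_le_mul_of_nonneg_right (h0 a b ha hb habδ) (abs_nonneg _)
    calc |(f a - f b) * (a - b)| ≤ (ε / 4 * |a - b| ^ α) * |a - b| := hnum
      _ = ε / 4 * (|a - b| ^ (1 + α)) := by rw [hden]; ring
  -- uniform continuity on the compact set away from the diagonal
  set g : ℝ × ℝ → ℝ := fun p => ((f p.1 - f p.2) * (p.1 - p.2)) / |p.1 - p.2| ^ (1 + α)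
    with hg_def
  set K : Set (ℝ × ℝ) := {p | |p.1| ≤ r ∧ |p.2| ≤ r ∧ δ₀ / 4 ≤ |p.1 - p.2|} with hK_def
  have hKclosed : IsClosed K := by
    apply IsClosed.inter
    · exact isClosed_le (continuous_abs.comp continuous_fst) continuous_const
    apply IsClosed.inter
    · exact isClosed_le (continuous_abs.comp continuous_snd) continuous_const
    · exact isClosed_le continuous_const
        (continuous_abs.comp (continuous_fst.sub continuous_snd))
  have hKbdd : Bornology.IsBounded K := by
    apply (Metric.isBounded_closedBall (x := (0 : ℝ × ℝ)) (r := r)).subset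
    intro p hp
    rw [Metric.mem_closedBall, dist_zero_right, Prod.norm_def]
    exact max_le (by simpa using hp.1) (by simpa using hp.2.1)
  have hKcomp : IsCompact K := Metric.isCompact_of_isClosed_isBounded hKclosed hKbdd
  have hgcont : ContinuousOn g K := by
    apply ContinuousOn.div
    · exact (((hcont.comp continuous_fst).sub (hcont.comp continuous_snd)).mul
        (continuous_fst.sub continuous_snd)).continuousOn
    · apply Continuous.continuousOn
      have hr : Continuous fun x : ℝ => x ^ (1 + α) :=
        Real.continuous_rpow_const (by positivity)
      exact hr.comp (continuous_abs.comp (continuous_fst.sub continuous_snd))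
    · intro p hp
      have : (0 : ℝ) < |p.1 - p.2| := lt_of_lt_of_le (by linarith) hp.2.2
      exact ne_of_gt (Real.rpow_pos_of_pos this _)
  have huc := hKcomp.uniformContinuousOn_of_continuous hgcont
  rw [Metric.uniformContinuousOn_iff] at huc
  obtain ⟨δ₁, hδ₁, h1⟩ := huc ε hε
  refine ⟨min (δ₁ / 2) (δ₀ / 8), by positivity, fun a b c d ha hb hc hd hab hcd hac hbd => ?_⟩
  have hac1 : |a - c| ≤ δ₁ / 2 := le_trans hac (min_le_left _ _)
  have hbd1 : |b - d| ≤ δ₁ / 2 := le_trans hbd (min_le_left _ _)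
  have hac0 : |a - c| ≤ δ₀ / 8 := le_trans hac (min_le_right _ _)
  have hbd0 : |b - d| ≤ δ₀ / 8 := le_trans hbd (min_le_right _ _)
  by_cases hcase : |a - b| ≤ δ₀ / 2
  · have hcd' : |c - d| ≤ δ₀ := by
      calc |c - d| = |(c - a) + (a - b) + (b - d)| := by ring_nf
        _ ≤ |(c - a) + (a - b)| + |b - d| := abs_add_le _ _
        _ ≤ |c - a| + |a - b| + |b - d| := by
            have := abs_add_le (c - a) (a - b); linarith
        _ ≤ δ₀ := by rw [abs_sub_comm c a]; linarith
    have h1' := hsmall a b ha hb hab (by linarith)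
    have h2' := hsmall c d hc hd hcd hcd'
    calc |((f a - f b) * (a - b)) / |a - b| ^ (1 + α)
          - ((f c - f d) * (c - d)) / |c - d| ^ (1 + α)|
        ≤ |((f a - f b) * (a - b)) / |a - b| ^ (1 + α)|
          + |((f c - f d) * (c - d)) / |c - d| ^ (1 + α)| := abs_sub _ _
      _ ≤ ε := by linarith
  · push_neg at hcase
    have hcd' : δ₀ / 4 ≤ |c - d| := by
      have : |a - b| ≤ |a - c| + |c - d| + |d - b| := by
        calc |a - b| = |(a - c) + (c - d) + (d - b)| := by ring_nf
          _ ≤ |(a - c) + (c - d)| + |d - b| := abs_add_le _ _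
          _ ≤ |a - c| + |c - d| + |d - b| := by
              have := abs_add_le (a - c) (c - d); linarith
      rw [abs_sub_comm d b] at this
      linarith
    have hmemab : (a, b) ∈ K := ⟨ha, hb, by simp only []; linarith⟩
    have hmemcd : (c, d) ∈ K := ⟨hc, hd, hcd'⟩
    have hdist : dist ((a, b) : ℝ × ℝ) (c, d) < δ₁ := by
      rw [Prod.dist_eq]
      apply max_lt
      · rw [Real.dist_eq]; linarith
      · rw [Real.dist_eq]; linarith
    have := h1 (a, b) hmemab (c, d) hmemcd hdist
    rw [Real.dist_eq] at this
    exact this.le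
end

section
/- Let α ∈ (0,1] and let f : ℝ → ℝ be quasi continuously differentiable with exponent α. Then f is Hölder continuous on bounded sets with exponent α: for every r > 0 there exists L_r ≥ 0 such that |f(u)−f(w)| ≤ L_r·|u−w|^α for all u, w ∈ [−r, r]. -/
theorem stmt4 (α : ℝ) (hα0 : 0 < α) (hα1 : α ≤ 1) (f : ℝ → ℝ)
    (hf : ∀ r > (0 : ℝ), ∀ ε > (0 : ℝ), ∃ δ > (0 : ℝ), ∀ a b c d : ℝ,
      |a| ≤ r → |b| ≤ r → |c| ≤ r → |d| ≤ r → a ≠ b → c ≠ d →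
      |a - c| ≤ δ → |b - d| ≤ δ →
      |((f a - f b) * (a - b)) / |a - b| ^ (1 + α)
        - ((f c - f d) * (c - d)) / |c - d| ^ (1 + α)| ≤ ε) :
    ∀ r > (0 : ℝ), ∃ L ≥ (0 : ℝ), ∀ u w : ℝ, |u| ≤ r → |w| ≤ r →
      |f u - f w| ≤ L * |u - w| ^ α := by
  intro r hr
  set Q : ℝ × ℝ → ℝ := fun p => ((f p.1 - f p.2) * (p.1 - p.2)) / |p.1 - p.2| ^ (1 + α)
    with hQdef
  set S : Set (ℝ × ℝ) := {p | |p.1| ≤ r ∧ |p.2| ≤ r ∧ p.1 ≠ p.2} with hSdef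
  -- S is totally bounded
  have hStb : TotallyBounded S := by
    refine TotallyBounded.subset ?_
      (isCompact_Icc (a := ((-r, -r) : ℝ × ℝ)) (b := (r, r))).totallyBounded
    rintro ⟨a, b⟩ ⟨ha, hb, -⟩
    rw [abs_le] at ha hb
    exact ⟨⟨ha.1, hb.1⟩, ⟨ha.2, hb.2⟩⟩
  -- Q is uniformly continuous on S
  have hQuc : UniformContinuousOn Q S := by
    rw [Metric.uniformContinuousOn_iff]
    intro ε hε
    obtain ⟨δ, hδ, h⟩ := hf r hr (ε / 2) (by linarith)
    refine ⟨δ, hδ, ?_⟩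
    rintro ⟨a, b⟩ ⟨ha, hb, hab⟩ ⟨c, d⟩ ⟨hc, hd, hcd⟩ hdist
    rw [Prod.dist_eq] at hdist
    have h1 : |a - c| ≤ δ := by
      have := (le_max_left (dist a c) (dist b d)).trans_lt hdist
      rw [Real.dist_eq] at this; linarith
    have h2 : |b - d| ≤ δ := by
      have := (le_max_right (dist a c) (dist b d)).trans_lt hdist
      rw [Real.dist_eq] at this; linarith
    calc dist (Q (a, b)) (Q (c, d)) = |Q (a, b) - Q (c, d)| := Real.dist_eq _ _
      _ ≤ ε / 2 := h a b c d ha hb hc hd hab hcd h1 h2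
      _ < ε := by linarith
  -- Q '' S is bounded
  have htb : TotallyBounded (Q '' S) := by
    rw [uniformContinuousOn_iff_restrict] at hQuc
    have hsub : TotallyBounded (Set.univ : Set S) := by
      have := (totallyBounded_image_iff
        isUniformEmbedding_subtype_val.isUniformInducing
        (s := (Set.univ : Set S))).1 ?_
      · exact this
      · rw [Set.image_univ, Subtype.range_coe]; exact hStb
    have := hsub.image hQuc
    rwa [Set.image_univ, Set.range_restrict] at this
  obtain ⟨M, hM⟩ := isBounded_iff_forall_norm_le.1 htb.isBounded
  refine ⟨max M 0, le_max_right _ _, ?_⟩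
  intro u w hu hw
  rcases eq_or_ne u w with rfl | huw
  · simp [Real.zero_rpow (ne_of_gt hα0)]
  · have hp : (u, w) ∈ S := ⟨hu, hw, huw⟩
    have hQle : |Q (u, w)| ≤ M := hM _ ⟨(u, w), hp, rfl⟩
    have habs : (0 : ℝ) < |u - w| := abs_pos.2 (sub_ne_zero.2 huw)
    have hαpos : (0 : ℝ) < |u - w| ^ α := Real.rpow_pos_of_pos habs α
    have hQval : |Q (u, w)| = |f u - f w| / |u - w| ^ α := by
      have hsplit : |u - w| ^ (1 + α) = |u - w| * |u - w| ^ α := by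
        rw [Real.rpow_add habs, Real.rpow_one]
      rw [hQdef]
      simp only
      rw [abs_div, abs_mul,
        abs_of_nonneg (Real.rpow_nonneg (abs_nonneg _) (1 + α)), hsplit]
      field_simp
    rw [hQval, div_le_iff₀ hαpos] at hQle
    calc |f u - f w| ≤ M * |u - w| ^ α := hQle
      _ ≤ max M 0 * |u - w| ^ α := by
          gcongr; exact le_max_left _ _
end

section
/- A function f : ℝ → ℝ is continuously differentiable if and only if f is quasi continuously differentiable with exponent α = 1, i.e., for every r > 0 and ε > 0 there exists δ > 0 such that for all a,b,c,d ∈ [−r,r] with a ≠ b, c ≠ d, |a−c| ≤ δ, |b−d| ≤ δ, one has |(f(a)−f(b))/(a−b) − (f(c)−f(d))/(c−d)| ≤ ε. -/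
open Filter Set Topology intervalIntegral MeasureTheory


lemma key_int (f : ℝ → ℝ) (hf : Differentiable ℝ f) (hc : Continuous (deriv f))
    (a b : ℝ) (hab : a ≠ b) :
    (f a - f b) / (a - b) = ∫ t in (0:ℝ)..1, deriv f (b + t * (a - b)) := by
  have hgc : Continuous fun t : ℝ => b + t * (a - b) :=
    continuous_const.add (continuous_id.mul continuous_const)
  have h1 : ∀ t ∈ Set.uIcc (0:ℝ) 1,
      HasDerivAt (fun t => f (b + t * (a - b))) (deriv f (b + t * (a - b)) * (a - b)) t := by
    intro t _
    have hg : HasDerivAt (fun t : ℝ => b + t * (a - b)) (a - b) t := by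
      simpa using ((hasDerivAt_id t).mul_const (a - b)).const_add b
    exact (hf _).hasDerivAt.comp t hg
  have h2 : IntervalIntegrable (fun t => deriv f (b + t * (a - b)) * (a - b))
      volume 0 1 := ((hc.comp hgc).mul continuous_const).intervalIntegrable _ _
  have h3 := intervalIntegral.integral_eq_sub_of_hasDerivAt h1 h2
  simp only [one_mul, zero_mul, add_zero] at h3
  rw [intervalIntegral.integral_mul_const] at h3
  have : f a - f b = (∫ t in (0:ℝ)..1, deriv f (b + t * (a - b))) * (a - b) := by
    rw [h3]; ring_nf
  rw [this]
  rw [mul_div_assoc, div_self (sub_ne_zero.mpr hab), mul_one]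

lemma fwd (f : ℝ → ℝ) (hC : ContDiff ℝ 1 f) :
    ∀ r > (0 : ℝ), ∀ ε > (0 : ℝ), ∃ δ > (0 : ℝ), ∀ a b c d : ℝ,
        |a| ≤ r → |b| ≤ r → |c| ≤ r → |d| ≤ r → a ≠ b → c ≠ d →
        |a - c| ≤ δ → |b - d| ≤ δ →
        |(f a - f b) / (a - b) - (f c - f d) / (c - d)| ≤ ε := by
  obtain ⟨hf, hc⟩ := contDiff_one_iff_deriv.mp hC
  intro r hr ε hε
  have huc : UniformContinuousOn (deriv f) (Icc (-r) r) :=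
    (isCompact_Icc).uniformContinuousOn_of_continuous hc.continuousOn
  rw [Metric.uniformContinuousOn_iff] at huc
  obtain ⟨δ1, hδ1, huc⟩ := huc ε hε
  refine ⟨δ1 / 2, by positivity, ?_⟩
  intro a b c d ha hb hhc hd hab hcd hac hbd
  have hi1 : IntervalIntegrable (fun t : ℝ => deriv f (b + t * (a - b))) volume 0 1 := by
    apply Continuous.intervalIntegrable; fun_prop
  have hi2 : IntervalIntegrable (fun t : ℝ => deriv f (d + t * (c - d))) volume 0 1 := by
    apply Continuous.intervalIntegrable; fun_prop
  rw [key_int f hf hc a b hab, key_int f hf hc c d hcd,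
    ← intervalIntegral.integral_sub hi1 hi2]
  have hb1 : ∀ t ∈ Set.uIoc (0:ℝ) 1,
      ‖deriv f (b + t * (a - b)) - deriv f (d + t * (c - d))‖ ≤ ε := by
    intro t ht
    rw [Set.uIoc_of_le (by norm_num : (0:ℝ) ≤ 1)] at ht
    obtain ⟨ht0, ht1⟩ := ht
    have hmem : ∀ u v : ℝ, |u| ≤ r → |v| ≤ r → v + t * (u - v) ∈ Icc (-r) r := by
      intro u v hu hv
      have : |v + t * (u - v)| ≤ r := by
        have : v + t * (u - v) = (1 - t) * v + t * u := by ring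
        rw [this]
        calc |(1 - t) * v + t * u| ≤ |(1 - t) * v| + |t * u| := abs_add_le _ _
          _ = (1 - t) * |v| + t * |u| := by
              rw [abs_mul, abs_mul, abs_of_nonneg (by linarith), abs_of_nonneg ht0.le]
          _ ≤ (1 - t) * r + t * r := by
              have h1t : (0:ℝ) ≤ 1 - t := by linarith
              gcongr
          _ = r := by ring
      exact abs_le.mp this |> fun ⟨h1, h2⟩ => ⟨h1, h2⟩
    have hdist : dist (b + t * (a - b)) (d + t * (c - d)) < δ1 := by
      rw [Real.dist_eq]
      have : b + t * (a - b) - (d + t * (c - d)) = (1 - t) * (b - d) + t * (a - c) := by ring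
      rw [this]
      calc |(1 - t) * (b - d) + t * (a - c)| ≤ |(1 - t) * (b - d)| + |t * (a - c)| := abs_add_le _ _
        _ = (1 - t) * |b - d| + t * |a - c| := by
            rw [abs_mul, abs_mul, abs_of_nonneg (by linarith), abs_of_nonneg ht0.le]
        _ ≤ (1 - t) * (δ1 / 2) + t * (δ1 / 2) := by
            have h1t : (0:ℝ) ≤ 1 - t := by linarith
            gcongr
        _ = δ1 / 2 := by ring
        _ < δ1 := by linarith
    have := huc _ (hmem a b ha hb) _ (hmem c d hhc hd) hdist
    rw [Real.dist_eq] at this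
    rw [Real.norm_eq_abs]
    exact this.le
  calc ‖∫ t in (0:ℝ)..1, (deriv f (b + t * (a - b)) - deriv f (d + t * (c - d)))‖
      ≤ ε * |1 - 0| := intervalIntegral.norm_integral_le_of_norm_le_const hb1
    _ = ε := by norm_num


lemma bwd (f : ℝ → ℝ)
    (H : ∀ r > (0 : ℝ), ∀ ε > (0 : ℝ), ∃ δ > (0 : ℝ), ∀ a b c d : ℝ,
        |a| ≤ r → |b| ≤ r → |c| ≤ r → |d| ≤ r → a ≠ b → c ≠ d →
        |a - c| ≤ δ → |b - d| ≤ δ →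
        |(f a - f b) / (a - b) - (f c - f d) / (c - d)| ≤ ε) :
    ContDiff ℝ 1 f := by
  -- Step 1: existence of the derivative at each point
  have hdiff : ∀ x : ℝ, ∃ L, Tendsto (slope f x) (𝓝[≠] x) (𝓝 L) := by
    intro x
    have hcauchy : Cauchy (Filter.map (slope f x) (𝓝[≠] x)) := by
      rw [Metric.cauchy_iff]
      refine ⟨Filter.map_neBot, ?_⟩
      intro ε hε
      obtain ⟨δ, hδ, hH⟩ := H (|x| + 1) (by positivity) (ε / 2) (by positivity)
      set ρ := min δ 1 / 2 with hρdef
      have hρ : 0 < ρ := by positivity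
      refine ⟨slope f x '' (Metric.ball x ρ \ {x}), ?_, ?_⟩
      · exact Filter.image_mem_map
          (diff_mem_nhdsWithin_compl (Metric.ball_mem_nhds x hρ) {x})
      · rintro _ ⟨y, ⟨hy, hyx⟩, rfl⟩ _ ⟨y', ⟨hy', hy'x⟩, rfl⟩
        simp only [Metric.mem_ball, Real.dist_eq] at hy hy'
        simp only [mem_singleton_iff] at hyx hy'x
        have hyr : |y| ≤ |x| + 1 := by
          have := abs_sub_abs_le_abs_sub y x
          have hρ1 : ρ ≤ 1 / 2 := by
            rw [hρdef]; have := min_le_right δ 1; linarith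
          linarith
        have hy'r : |y'| ≤ |x| + 1 := by
          have := abs_sub_abs_le_abs_sub y' x
          have hρ1 : ρ ≤ 1 / 2 := by
            rw [hρdef]; have := min_le_right δ 1; linarith
          linarith
        have hyy' : |y - y'| ≤ δ := by
          have h2ρ : 2 * ρ ≤ δ := by
            rw [hρdef]; have := min_le_left δ 1; linarith
          calc |y - y'| = |(y - x) + (x - y')| := by ring_nf
            _ ≤ |y - x| + |x - y'| := abs_add_le _ _
            _ ≤ ρ + ρ := by
                rw [abs_sub_comm x y']; exact add_le_add hy.le hy'.le
            _ ≤ δ := by linarith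
        have := hH y x y' x hyr (by linarith [abs_nonneg x]) hy'r
          (by linarith [abs_nonneg x]) hyx hy'x hyy' (by simp [hδ.le])
        rw [Real.dist_eq]
        have hs : slope f x y = (f y - f x) / (y - x) := by
          rw [slope_def_field]
        have hs' : slope f x y' = (f y' - f x) / (y' - x) := by
          rw [slope_def_field]
        rw [hs, hs']
        calc |(f y - f x) / (y - x) - (f y' - f x) / (y' - x)| ≤ ε / 2 := this
          _ < ε := by linarith
    obtain ⟨L, hL⟩ := CompleteSpace.complete hcauchy
    exact ⟨L, hL⟩
  choose L hL using hdiff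
  have hder : ∀ x, HasDerivAt f (L x) x := fun x =>
    hasDerivAt_iff_tendsto_slope.mpr (hL x)
  have hDiff : Differentiable ℝ f := fun x => (hder x).differentiableAt
  have hLd : ∀ x, deriv f x = L x := fun x => (hder x).deriv
  -- Step 2: continuity of the derivative
  have hcont : Continuous (deriv f) := by
    rw [Metric.continuous_iff]
    intro x ε hε
    obtain ⟨δ, hδ, hH⟩ := H (|x| + 2) (by positivity) (ε / 2) (by positivity)
    refine ⟨min δ 1, lt_min hδ one_pos, ?_⟩
    intro x' hx'
    rw [Real.dist_eq] at hx'
    have hxd : |x' - x| < δ := lt_of_lt_of_le hx' (min_le_left _ _)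
    have hx1 : |x' - x| < 1 := lt_of_lt_of_le hx' (min_le_right _ _)
    -- the map h ↦ x + h sends 𝓝[≠] 0 to 𝓝[≠] x, and similarly for x'
    have hmap : ∀ z : ℝ, Tendsto (fun h : ℝ => z + h) (𝓝[≠] (0:ℝ)) (𝓝[≠] z) := by
      intro z
      rw [tendsto_nhdsWithin_iff]
      constructor
      · have : Tendsto (fun h : ℝ => z + h) (𝓝 0) (𝓝 z) := by
          simpa using (continuous_add_left z).tendsto (0:ℝ)
        exact this.mono_left nhdsWithin_le_nhds
      · filter_upwards [self_mem_nhdsWithin] with h hh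
        simp only [mem_compl_iff, mem_singleton_iff] at hh ⊢
        intro hc; exact hh (by linarith)
    have T : Tendsto (fun h : ℝ => slope f x' (x' + h) - slope f x (x + h)) (𝓝[≠] (0:ℝ))
        (𝓝 (L x' - L x)) :=
      ((hL x').comp (hmap x')).sub ((hL x).comp (hmap x))
    have hev : ∀ᶠ h in 𝓝[≠] (0:ℝ),
        |slope f x' (x' + h) - slope f x (x + h)| ≤ ε / 2 := by
      have hball : Metric.ball (0:ℝ) 1 ∈ 𝓝[≠] (0:ℝ) :=
        nhdsWithin_le_nhds (Metric.ball_mem_nhds _ one_pos)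
      filter_upwards [hball, self_mem_nhdsWithin] with h hh1 hh2
      simp only [Metric.mem_ball, Real.dist_eq, sub_zero] at hh1
      simp only [mem_compl_iff, mem_singleton_iff] at hh2
      have ha : |x' + h| ≤ |x| + 2 := by
        calc |x' + h| = |x + (x' - x) + h| := by ring_nf
          _ ≤ |x + (x' - x)| + |h| := abs_add_le _ _
          _ ≤ |x| + |x' - x| + |h| := by linarith [abs_add_le x (x' - x)]
          _ ≤ |x| + 2 := by linarith
      have hb : |x'| ≤ |x| + 2 := by
        calc |x'| = |x + (x' - x)| := by ring_nf
          _ ≤ |x| + |x' - x| := abs_add_le _ _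
          _ ≤ |x| + 2 := by linarith
      have hc2 : |x + h| ≤ |x| + 2 := by
        calc |x + h| ≤ |x| + |h| := abs_add_le _ _
          _ ≤ |x| + 2 := by linarith
      have hd2 : |x| ≤ |x| + 2 := by linarith
      have hne1 : x' + h ≠ x' := by intro hcon; exact hh2 (by linarith)
      have hne2 : x + h ≠ x := by intro hcon; exact hh2 (by linarith)
      have hac : |x' + h - (x + h)| ≤ δ := by
        have : x' + h - (x + h) = x' - x := by ring
        rw [this]; exact hxd.le
      have := hH (x' + h) x' (x + h) x ha hb hc2 hd2 hne1 hne2 hac hxd.le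
      have hs1 : slope f x' (x' + h) = (f (x' + h) - f x') / (x' + h - x') := by
        rw [slope_def_field]
      have hs2 : slope f x (x + h) = (f (x + h) - f x) / (x + h - x) := by
        rw [slope_def_field]
      rw [hs1, hs2]
      exact this
    have hle : |L x' - L x| ≤ ε / 2 :=
      le_of_tendsto T.abs hev
    rw [Real.dist_eq, hLd x', hLd x]
    linarith
  exact contDiff_one_iff_deriv.mpr ⟨hDiff, hcont⟩

theorem stmt5 (f : ℝ → ℝ) :
    ContDiff ℝ 1 f ↔
      ∀ r > (0 : ℝ), ∀ ε > (0 : ℝ), ∃ δ > (0 : ℝ), ∀ a b c d : ℝ,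
        |a| ≤ r → |b| ≤ r → |c| ≤ r → |d| ≤ r → a ≠ b → c ≠ d →
        |a - c| ≤ δ → |b - d| ≤ δ →
        |(f a - f b) / (a - b) - (f c - f d) / (c - d)| ≤ ε := ⟨fwd f, bwd f⟩
end

section
/- For α ∈ (0,1], the function f(u) = |u|^α on ℝ is not quasi continuously differentiable with exponent α: there exist r > 0 and ε > 0 such that for every δ > 0 there are a,b,c,d ∈ [−r,r] with a ≠ b, c ≠ d, |a−c| ≤ δ, |b−d| ≤ δ, and |((f(a)−f(b))(a−b))/|a−b|^(1+α) − ((f(c)−f(d))(c−d))/|c−d|^(1+α)| > ε. In fact, for every 0 < u ≤ δ/2 the two pairs (u,0) and (−u,0) give difference exactly 2. -/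
lemma key_s6 (α : ℝ) (hα0 : 0 < α) (u : ℝ) (hu : 0 < u) :
    ((|u| ^ α - |(0:ℝ)| ^ α) * (u - 0)) / |u - 0| ^ (1 + α) = 1 := by
  rw [abs_zero, Real.zero_rpow hα0.ne', sub_zero, sub_zero, abs_of_pos hu,
    Real.rpow_add hu, Real.rpow_one]
  field_simp

lemma key2 (α : ℝ) (hα0 : 0 < α) (u : ℝ) (hu : 0 < u) :
    ((|(-u)| ^ α - |(0:ℝ)| ^ α) * (-u - 0)) / |(-u) - 0| ^ (1 + α) = -1 := by
  rw [abs_zero, Real.zero_rpow hα0.ne', sub_zero, sub_zero, abs_neg, abs_of_pos hu,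
    Real.rpow_add hu, Real.rpow_one]
  field_simp

theorem stmt6 (α : ℝ) (hα0 : 0 < α) (hα1 : α ≤ 1) (f : ℝ → ℝ)
    (hf : f = fun u => |u| ^ α) :
    (∃ r > (0 : ℝ), ∃ ε > (0 : ℝ), ∀ δ > (0 : ℝ), ∃ a b c d : ℝ,
      |a| ≤ r ∧ |b| ≤ r ∧ |c| ≤ r ∧ |d| ≤ r ∧ a ≠ b ∧ c ≠ d ∧
      |a - c| ≤ δ ∧ |b - d| ≤ δ ∧
      ε < |((f a - f b) * (a - b)) / |a - b| ^ (1 + α)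
            - ((f c - f d) * (c - d)) / |c - d| ^ (1 + α)|) ∧
    (∀ δ > (0 : ℝ), ∀ u : ℝ, 0 < u → u ≤ δ / 2 →
      |((f u - f 0) * (u - 0)) / |u - 0| ^ (1 + α)
        - ((f (-u) - f 0) * (-u - 0)) / |(-u) - 0| ^ (1 + α)| = 2) := by
  subst hf
  constructor
  · refine ⟨1, one_pos, 1, one_pos, fun δ hδ => ?_⟩
    set u := min (δ / 2) 1 with hu
    have hu0 : 0 < u := lt_min (by linarith) one_pos
    have hu1 : u ≤ 1 := min_le_right _ _
    have huδ : u ≤ δ / 2 := min_le_left _ _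
    refine ⟨u, 0, -u, 0, ?_, ?_, ?_, ?_, ?_, ?_, ?_, ?_, ?_⟩
    · rwa [abs_of_pos hu0]
    · simp
    · rwa [abs_neg, abs_of_pos hu0]
    · simp
    · exact hu0.ne'
    · exact (neg_neg_iff_pos.mpr hu0).ne
    · rw [sub_neg_eq_add, abs_of_pos (by linarith)]; linarith
    · simpa using hδ.le
    · rw [key_s6 α hα0 u hu0, key2 α hα0 u hu0]; norm_num
  · intro δ hδ u hu0 huδ
    rw [key_s6 α hα0 u hu0, key2 α hα0 u hu0]; norm_num
end

section
/- If f : ℝ → ℝ is continuously differentiable, then f is quasi continuously differentiable with any exponent α ∈ (0,1): for every r > 0 and ε > 0 there exists δ > 0 such that for all a,b,c,d ∈ [−r,r] with a ≠ b, c ≠ d, |a−c| ≤ δ, |b−d| ≤ δ, one has |((f(a)−f(b))(a−b))/|a−b|^(1+α) − ((f(c)−f(d))(c−d))/|c−d|^(1+α)| ≤ ε. -/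
theorem stmt7 (α : ℝ) (hα0 : 0 < α) (hα1 : α < 1) (f : ℝ → ℝ) (hf : ContDiff ℝ 1 f) :
    ∀ r > (0 : ℝ), ∀ ε > (0 : ℝ), ∃ δ > (0 : ℝ), ∀ a b c d : ℝ,
      |a| ≤ r → |b| ≤ r → |c| ≤ r → |d| ≤ r → a ≠ b → c ≠ d →
      |a - c| ≤ δ → |b - d| ≤ δ →
      |((f a - f b) * (a - b)) / |a - b| ^ (1 + α)
        - ((f c - f d) * (c - d)) / |c - d| ^ (1 + α)| ≤ ε := by
  set g : ℝ × ℝ → ℝ := fun p => ((f p.1 - f p.2) * (p.1 - p.2)) / |p.1 - p.2| ^ (1 + α)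
    with hgdef
  have h1α : (0:ℝ) < 1 + α := by linarith
  have h1α' : (0:ℝ) < 1 - α := by linarith
  have hfc : Continuous f := hf.continuous
  have habs : Continuous fun p : ℝ × ℝ => |p.1 - p.2| :=
    (continuous_fst.sub continuous_snd).abs
  have hden : Continuous fun p : ℝ × ℝ => |p.1 - p.2| ^ (1 + α) :=
    habs.rpow_const (fun x => Or.inr h1α.le)
  have hg : Continuous g := by
    rw [continuous_iff_continuousAt]
    intro p
    by_cases hp : p.1 = p.2
    · -- diagonal point
      have hg0 : g p = 0 := by simp [hgdef, hp]
      rw [ContinuousAt, hg0]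
      obtain ⟨K, t, ht, hK⟩ := hf.locallyLipschitz p.1
      have ht2 : t ∈ nhds p.2 := hp ▸ ht
      have hmem : t ×ˢ t ∈ nhds p := by
        rw [show p = (p.1, p.2) from rfl]
        exact prod_mem_nhds ht ht2
      apply squeeze_zero_norm' (a := fun q : ℝ × ℝ => (K : ℝ) * |q.1 - q.2| ^ (1 - α)) ?_ ?_
      · filter_upwards [hmem] with q hq
        rcases eq_or_ne q.1 q.2 with h | h
        · have : g q = 0 := by simp [hgdef, h]
          rw [this]
          simp only [norm_zero]
          positivity
        · have hpos : (0:ℝ) < |q.1 - q.2| := abs_pos.mpr (sub_ne_zero.mpr h)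
          set s := |q.1 - q.2| with hs
          have hlip : |f q.1 - f q.2| ≤ (K : ℝ) * s := by
            have := hK.dist_le_mul q.1 hq.1 q.2 hq.2
            simpa [Real.dist_eq] using this
          have hkey : s * s / s ^ (1 + α) = s ^ (1 - α) := by
            rw [div_eq_iff (by positivity), ← Real.rpow_add hpos]
            have : (1 - α) + (1 + α) = (2:ℝ) := by ring
            rw [this, show (2:ℝ) = ((2:ℕ):ℝ) by norm_num, Real.rpow_natCast]
            ring
          have : ‖g q‖ = |f q.1 - f q.2| * s / s ^ (1 + α) := by
            simp only [hgdef, Real.norm_eq_abs, abs_div, abs_mul, abs_abs]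
            rw [abs_of_nonneg (Real.rpow_nonneg (abs_nonneg _) _)]
          rw [this]
          calc |f q.1 - f q.2| * s / s ^ (1 + α)
              ≤ ((K : ℝ) * s) * s / s ^ (1 + α) := by
                apply div_le_div_of_nonneg_right ?_ (by positivity)
                exact mul_le_mul_of_nonneg_right hlip hpos.le
            _ = (K : ℝ) * (s * s / s ^ (1 + α)) := by ring
            _ = (K : ℝ) * s ^ (1 - α) := by rw [hkey]
      · have hcont : Continuous fun q : ℝ × ℝ => (K : ℝ) * |q.1 - q.2| ^ (1 - α) :=
          continuous_const.mul (habs.rpow_const (fun x => Or.inr h1α'.le))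
        have := hcont.tendsto p
        simpa [hp, Real.zero_rpow (ne_of_gt h1α')] using this
    · -- off-diagonal
      have hne : |p.1 - p.2| ^ (1 + α) ≠ 0 := by
        have : (0:ℝ) < |p.1 - p.2| := abs_pos.mpr (sub_ne_zero.mpr hp)
        positivity
      exact ContinuousAt.div
        (((hfc.comp continuous_fst).sub (hfc.comp continuous_snd)).mul
          (continuous_fst.sub continuous_snd)).continuousAt
        hden.continuousAt hne
  intro r hr ε hε
  have hcomp : IsCompact (Set.Icc (-r) r ×ˢ Set.Icc (-r) r) :=
    isCompact_Icc.prod isCompact_Icc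
  have hu : UniformContinuousOn g (Set.Icc (-r) r ×ˢ Set.Icc (-r) r) :=
    hcomp.uniformContinuousOn_of_continuous hg.continuousOn
  rw [Metric.uniformContinuousOn_iff] at hu
  obtain ⟨δ, hδ, H⟩ := hu ε hε
  refine ⟨δ / 2, by linarith, ?_⟩
  intro a b c d ha hb hc hd hab hcd h1 h2
  have hmem1 : ((a, b) : ℝ × ℝ) ∈ Set.Icc (-r) r ×ˢ Set.Icc (-r) r :=
    ⟨Set.mem_Icc.mpr (abs_le.mp ha), Set.mem_Icc.mpr (abs_le.mp hb)⟩
  have hmem2 : ((c, d) : ℝ × ℝ) ∈ Set.Icc (-r) r ×ˢ Set.Icc (-r) r :=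
    ⟨Set.mem_Icc.mpr (abs_le.mp hc), Set.mem_Icc.mpr (abs_le.mp hd)⟩
  have hdist : dist ((a, b) : ℝ × ℝ) ((c, d) : ℝ × ℝ) < δ := by
    rw [Prod.dist_eq]
    exact max_lt (by rw [Real.dist_eq]; linarith) (by rw [Real.dist_eq]; linarith)
  have := H (a, b) hmem1 (c, d) hmem2 hdist
  rw [Real.dist_eq] at this
  exact le_of_lt this
end

section
/- For 0 < α < β < 1 the function f(u) = |u|^β belongs to qC^{1,α}(ℝ) but is not continuously differentiable (it is not differentiable at 0). -/
open Filter Topology Set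

lemma qq_aux_add {β : ℝ} (hβ0 : 0 ≤ β) (hβ1 : β ≤ 1) {a b : ℝ} (ha : 0 ≤ a) (hb : 0 ≤ b) :
    (a + b) ^ β ≤ a ^ β + b ^ β := by
  have h := NNReal.rpow_add_le_add_rpow (a.toNNReal) (b.toNNReal) hβ0 hβ1
  have h2 := NNReal.coe_le_coe.2 h
  rw [NNReal.coe_add] at h2
  simpa [NNReal.coe_rpow, ← Real.toNNReal_add ha hb, Real.coe_toNNReal _ ha,
    Real.coe_toNNReal _ hb, Real.coe_toNNReal _ (by positivity : (0:ℝ) ≤ a + b)] using h2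

lemma qq_holder {β : ℝ} (hβ0 : 0 < β) (hβ1 : β ≤ 1) (a b : ℝ) :
    |(|a| ^ β - |b| ^ β)| ≤ |a - b| ^ β := by
  have key : ∀ x y : ℝ, |y| ≤ |x| → |x| ^ β - |y| ^ β ≤ |x - y| ^ β := by
    intro x y hxy
    have h1 : |x| ≤ |y| + |x - y| := by
      have := abs_sub_abs_le_abs_sub x y; linarith
    have h2 : |x| ^ β ≤ (|y| + |x - y|) ^ β :=
      Real.rpow_le_rpow (abs_nonneg x) h1 hβ0.le
    have h3 : (|y| + |x - y|) ^ β ≤ |y| ^ β + |x - y| ^ β :=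
      qq_aux_add hβ0.le hβ1 (abs_nonneg y) (abs_nonneg _)
    linarith
  rcases le_total |b| |a| with h | h
  · rw [abs_sub_le_iff]
    refine ⟨key a b h, ?_⟩
    have : |b| ^ β ≤ |a| ^ β := Real.rpow_le_rpow (abs_nonneg b) h hβ0.le
    have : (0:ℝ) ≤ |a - b| ^ β := Real.rpow_nonneg (abs_nonneg _) β
    linarith [Real.rpow_le_rpow (abs_nonneg b) h hβ0.le]
  · rw [abs_sub_le_iff]
    constructor
    · have : |a| ^ β ≤ |b| ^ β := Real.rpow_le_rpow (abs_nonneg a) h hβ0.le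
      have h0 : (0:ℝ) ≤ |a - b| ^ β := Real.rpow_nonneg (abs_nonneg _) β
      linarith
    · have := key b a h
      rwa [abs_sub_comm b a] at this

theorem stmt8 (α β : ℝ) (hα0 : 0 < α) (hαβ : α < β) (hβ1 : β < 1) (f : ℝ → ℝ)
    (hf : f = fun u => |u| ^ β) :
    (∀ r > (0 : ℝ), ∀ ε > (0 : ℝ), ∃ δ > (0 : ℝ), ∀ a b c d : ℝ,
      |a| ≤ r → |b| ≤ r → |c| ≤ r → |d| ≤ r → a ≠ b → c ≠ d →
      |a - c| ≤ δ → |b - d| ≤ δ →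
      |((f a - f b) * (a - b)) / |a - b| ^ (1 + α)
        - ((f c - f d) * (c - d)) / |c - d| ^ (1 + α)| ≤ ε) ∧
    ¬ DifferentiableAt ℝ f 0 := by
  have hβ0 : 0 < β := hα0.trans hαβ
  have hβα : 0 < β - α := by linarith
  have hfcont : Continuous f := by
    rw [hf]; exact (Real.continuous_rpow_const hβ0.le).comp continuous_abs
  constructor
  · -- Part 1
    set G : ℝ × ℝ → ℝ := fun p =>
      if p.1 = p.2 then 0 else (f p.1 - f p.2) * (p.1 - p.2) / |p.1 - p.2| ^ (1 + α) with hG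
    have hbound : ∀ p : ℝ × ℝ, ‖G p‖ ≤ |p.1 - p.2| ^ (β - α) := by
      intro ⟨x, y⟩
      by_cases hp : x = y
      · simp only [hG, if_pos hp, norm_zero]
        positivity
      · have ht : 0 < |x - y| := abs_pos.2 (sub_ne_zero.2 hp)
        simp only [hG, if_neg hp, Real.norm_eq_abs]
        rw [abs_div, abs_mul]
        have hden : |(|x - y| ^ (1 + α))| = |x - y| ^ (1 + α) :=
          abs_of_nonneg (Real.rpow_nonneg (abs_nonneg _) _)
        rw [hden]
        have hnum : |f x - f y| * |x - y| ≤ |x - y| ^ β * |x - y| := by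
          apply mul_le_mul_of_nonneg_right _ (abs_nonneg _)
          rw [hf]; exact qq_holder hβ0 hβ1.le x y
        calc |f x - f y| * |x - y| / |x - y| ^ (1 + α)
            ≤ |x - y| ^ β * |x - y| / |x - y| ^ (1 + α) := by
              gcongr
          _ = |x - y| ^ (β - α) := by
              rw [show |x - y| ^ β * |x - y| = |x - y| ^ (β + 1) by
                rw [Real.rpow_add ht, Real.rpow_one],
                ← Real.rpow_sub ht]
              ring_nf
    have hGcont : Continuous G := by
      rw [continuous_iff_continuousAt]
      intro p
      by_cases hp : p.1 = p.2
      · have h0 : G p = 0 := if_pos hp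
        rw [ContinuousAt, h0]
        apply squeeze_zero_norm hbound
        have hc : Continuous fun t : ℝ × ℝ => |t.1 - t.2| ^ (β - α) :=
          (Real.continuous_rpow_const hβα.le).comp ((continuous_fst.sub continuous_snd).abs)
        have hc2 := hc.continuousAt (x := p)
        rw [ContinuousAt] at hc2
        have : |p.1 - p.2| ^ (β - α) = 0 := by
          rw [hp, sub_self, abs_zero, Real.zero_rpow hβα.ne']
        rwa [this] at hc2
      · have hopen : IsOpen {q : ℝ × ℝ | q.1 ≠ q.2} := isOpen_ne_fun continuous_fst continuous_snd
        have heq : (fun q : ℝ × ℝ => (f q.1 - f q.2) * (q.1 - q.2) / |q.1 - q.2| ^ (1 + α))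
            =ᶠ[𝓝 p] G := by
          filter_upwards [hopen.mem_nhds hp] with q hq
          exact (if_neg hq).symm
        refine ContinuousAt.congr ?_ heq
        apply ContinuousAt.div
        · exact (((hfcont.comp continuous_fst).sub (hfcont.comp continuous_snd)).mul
            (continuous_fst.sub continuous_snd)).continuousAt
        · exact ((Real.continuous_rpow_const (by linarith)).comp
            ((continuous_fst.sub continuous_snd).abs)).continuousAt
        · have : 0 < |p.1 - p.2| := abs_pos.2 (sub_ne_zero.2 hp)
          exact (Real.rpow_pos_of_pos this _).ne'
    intro r hr ε hε
    have hK : IsCompact (Metric.closedBall (0:ℝ) r ×ˢ Metric.closedBall (0:ℝ) r) :=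
      (isCompact_closedBall _ _).prod (isCompact_closedBall _ _)
    have hUC := hK.uniformContinuousOn_of_continuous hGcont.continuousOn
    rw [Metric.uniformContinuousOn_iff] at hUC
    obtain ⟨δ, hδ, H⟩ := hUC ε hε
    refine ⟨δ / 2, by linarith, ?_⟩
    intro a b c d ha hb hc hd hab hcd hac hbd
    have hmem : ∀ x y : ℝ, |x| ≤ r → |y| ≤ r →
        (x, y) ∈ Metric.closedBall (0:ℝ) r ×ˢ Metric.closedBall (0:ℝ) r := by
      intro x y hx hy
      constructor <;> simp [Real.dist_eq, *]
    have hdist : dist ((a, b) : ℝ × ℝ) (c, d) < δ := by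
      rw [Prod.dist_eq]
      have h1 : dist a c < δ := by rw [Real.dist_eq]; linarith
      have h2 : dist b d < δ := by rw [Real.dist_eq]; linarith
      exact max_lt h1 h2
    have := H (a, b) (hmem a b ha hb) (c, d) (hmem c d hc hd) hdist
    rw [Real.dist_eq] at this
    simpa only [hG, if_neg hab, if_neg hcd] using this.le
  · -- Part 2
    intro hdiff
    have hc := hdiff.hasDerivAt
    rw [hasDerivAt_iff_tendsto_slope] at hc
    have h1 : Tendsto (slope f 0) (𝓝[>] 0) (𝓝 (deriv f 0)) :=
      hc.mono_left (nhdsWithin_mono _ (fun x hx => ne_of_gt hx))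
    have h2 : Tendsto (fun x : ℝ => x ^ (β - 1)) (𝓝[>] 0) (𝓝 (deriv f 0)) := by
      apply h1.congr'
      filter_upwards [self_mem_nhdsWithin] with x hx
      have hx0 : (0:ℝ) < x := hx
      rw [slope_def_field, hf]
      simp only
      rw [abs_zero, Real.zero_rpow hβ0.ne', abs_of_pos hx0, sub_zero, sub_zero,
        Real.rpow_sub hx0, Real.rpow_one]
    have h3 : Tendsto (fun x : ℝ => x ^ (β - 1)) (𝓝[>] 0) atTop := by
      have := (tendsto_rpow_atTop (y := 1 - β) (by linarith)).comp tendsto_inv_nhdsGT_zero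
      apply this.congr'
      filter_upwards [self_mem_nhdsWithin] with x hx
      have hx0 : (0:ℝ) < x := hx
      simp only [Function.comp]
      rw [Real.inv_rpow hx0.le, ← Real.rpow_neg hx0.le, neg_sub]
    exact not_tendsto_nhds_of_tendsto_atTop h3 _ h2
end

section
/- Let E be a real or complex normed space, p, q ∈ [1,∞), and let f : E → E. Suppose the composition operator C_f(x)(n) = f(x(n)) maps bv_p(E) into bv_q(E) and is uniformly continuous, i.e., for every ε > 0 there is δ > 0 such that ‖C_f(x)−C_f(y)‖_{bv_q} ≤ ε whenever ‖x−y‖_{bv_p} ≤ δ. Then f(½(u+w)) = ½f(u) + ½f(w) for all u, w ∈ E; consequently the map φ(u) = f(u)−f(0) is additive. -/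
noncomputable def bvNorm {E : Type*} [NormedAddCommGroup E] (p : ℝ) (x : ℕ → E) : ℝ :=
  ‖x 0‖ + (∑' n : ℕ, ‖x (n + 1) - x n‖ ^ p) ^ (1 / p)

def memBV {E : Type*} [NormedAddCommGroup E] (p : ℝ) (x : ℕ → E) : Prop :=
  Summable fun n : ℕ => ‖x (n + 1) - x n‖ ^ p

lemma bv_key_lemma {E : Type*} [NormedAddCommGroup E]
    (p q : ℝ) (hp : 1 ≤ p) (hq : 1 ≤ q) (f : E → E) (δ : ℝ)
    (h : ∀ x y : ℕ → E, memBV p x → memBV p y →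
      bvNorm p (fun n => x n - y n) ≤ δ →
      bvNorm q (fun n => f (x n) - f (y n)) ≤ 1)
    (α β γ η : E) (hd : α - γ = β - η) (hn : ‖α - γ‖ ≤ δ) :
    f α - f γ = f β - f η := by
  have hp0 : p ≠ 0 := by linarith
  have hq0 : (0:ℝ) < q := by linarith
  set A := f α - f γ with hA
  set B := f β - f η with hB
  by_contra hne
  have hc : 0 < ‖B - A‖ := by
    rw [norm_pos_iff, sub_ne_zero]
    exact fun e => hne e.symm
  obtain ⟨N, hN⟩ := exists_nat_gt (1 / ‖B - A‖ ^ q)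
  set x : ℕ → E := fun k => if Odd k ∧ k < 2 * N then β else α with hx
  set y : ℕ → E := fun k => if Odd k ∧ k < 2 * N then η else γ with hy
  have hxy : (fun n => x n - y n) = fun _ => α - γ := by
    funext k
    simp only [hx, hy]
    split_ifs with hk
    · rw [hd]
    · rfl
  have hmemx : memBV p x := by
    apply summable_of_ne_finset_zero (s := Finset.range (2 * N))
    intro k hk
    simp only [Finset.mem_range, not_lt] at hk
    have h1 : x (k+1) = α := by
      simp only [hx]; rw [if_neg]; rintro ⟨-, h2⟩; omega
    have h2 : x k = α := by
      simp only [hx]; rw [if_neg]; rintro ⟨-, h2⟩; omega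
    rw [h1, h2, sub_self, norm_zero, Real.zero_rpow hp0]
  have hmemy : memBV p y := by
    apply summable_of_ne_finset_zero (s := Finset.range (2 * N))
    intro k hk
    simp only [Finset.mem_range, not_lt] at hk
    have h1 : y (k+1) = γ := by
      simp only [hy]; rw [if_neg]; rintro ⟨-, h2⟩; omega
    have h2 : y k = γ := by
      simp only [hy]; rw [if_neg]; rintro ⟨-, h2⟩; omega
    rw [h1, h2, sub_self, norm_zero, Real.zero_rpow hp0]
  have hbv : bvNorm p (fun n => x n - y n) ≤ δ := by
    rw [hxy]
    unfold bvNorm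
    simp only [sub_self, norm_zero, Real.zero_rpow hp0, tsum_zero]
    rw [Real.zero_rpow (one_div_ne_zero hp0), add_zero]
    exact hn
  have hle := h x y hmemx hmemy hbv
  have hval : ∀ k, f (x k) - f (y k) = if Odd k ∧ k < 2*N then B else A := by
    intro k
    simp only [hx, hy]
    split_ifs <;> rfl
  have hdiff : ∀ k : ℕ, ‖(f (x (k+1)) - f (y (k+1))) - (f (x k) - f (y k))‖ ^ q
      = if k < 2*N then ‖B - A‖ ^ q else 0 := by
    intro k
    rw [hval, hval]
    by_cases hk : k < 2*N
    · rw [if_pos hk]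
      rcases Nat.even_or_odd k with he | ho
      · have h1 : Odd (k+1) := Even.add_one he
        have h2 : k + 1 < 2*N := by
          rcases he with ⟨m, hm⟩; omega
        rw [if_pos ⟨h1, h2⟩, if_neg (fun hh => (Nat.not_odd_iff_even.mpr he) hh.1)]
      · have h1 : ¬ Odd (k+1) := by
          rcases ho with ⟨m, hm⟩
          simp [Nat.odd_iff]; omega
        rw [if_neg (fun hh => h1 hh.1), if_pos ⟨ho, hk⟩, norm_sub_rev]
    · rw [if_neg hk, if_neg (fun hh => hk (by omega : k < 2*N)),
        if_neg (fun hh : Odd k ∧ k < 2*N => hk hh.2), sub_self, norm_zero,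
        Real.zero_rpow (by linarith : q ≠ 0)]
  have htsum : (∑' k : ℕ, ‖(f (x (k+1)) - f (y (k+1))) - (f (x k) - f (y k))‖ ^ q)
      = (2*N : ℝ) * ‖B - A‖ ^ q := by
    rw [tsum_eq_sum (s := Finset.range (2*N))
      (fun k hk => by rw [hdiff k, if_neg (by simpa using hk)])]
    rw [Finset.sum_congr rfl (fun k hk => by rw [hdiff k, if_pos (Finset.mem_range.mp hk)])]
    rw [Finset.sum_const, Finset.card_range, nsmul_eq_mul]
    push_cast
    ring
  unfold bvNorm at hle
  rw [htsum] at hle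
  have h2 : ((2*N : ℝ) * ‖B - A‖ ^ q) ^ (1/q) ≤ 1 := by
    have := norm_nonneg (f (x 0) - f (y 0))
    linarith
  have hcq : 0 < ‖B - A‖ ^ q := Real.rpow_pos_of_pos hc q
  have h3 : 1 < (2*N : ℝ) * ‖B - A‖ ^ q := by
    rw [div_lt_iff₀ hcq] at hN
    have hN0 : (0:ℝ) ≤ (N:ℝ) := Nat.cast_nonneg N
    nlinarith
  have h4 : 1 < ((2*N:ℝ) * ‖B-A‖^q) ^ (1/q) := by
    rw [Real.one_lt_rpow_iff_of_pos (by linarith)]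
    exact Or.inl ⟨h3, by positivity⟩
  linarith

theorem stmt10 {E : Type*} [NormedAddCommGroup E] [NormedSpace ℝ E]
    (p q : ℝ) (hp : 1 ≤ p) (hq : 1 ≤ q) (f : E → E)
    (hmaps : ∀ x : ℕ → E, memBV p x → memBV q (fun n => f (x n)))
    (hUC : ∀ ε > (0 : ℝ), ∃ δ > (0 : ℝ), ∀ x y : ℕ → E, memBV p x → memBV p y →
      bvNorm p (fun n => x n - y n) ≤ δ →
      bvNorm q (fun n => f (x n) - f (y n)) ≤ ε) :
    (∀ u w : E, f ((1 / 2 : ℝ) • (u + w)) = (1 / 2 : ℝ) • f u + (1 / 2 : ℝ) • f w) ∧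
    (∀ u w : E, f (u + w) - f 0 = (f u - f 0) + (f w - f 0)) := by
  obtain ⟨δ, hδ, h⟩ := hUC 1 one_pos
  have key : ∀ α β γ η : E, α - γ = β - η → ‖α - γ‖ ≤ δ → f α - f γ = f β - f η :=
    fun α β γ η => bv_key_lemma p q hp hq f δ h α β γ η
  have mid : ∀ u w : E, f ((1/2 : ℝ) • (u + w)) = (1/2:ℝ) • f u + (1/2:ℝ) • f w := by
    intro u w
    set m := (1/2:ℝ) • (u + w) with hm
    set d := (1/2:ℝ) • (u - w) with hdd
    have hmd1 : m + d = u := by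
      rw [hm, hdd, ← smul_add]
      have : u + w + (u - w) = (2:ℝ) • u := by
        rw [two_smul]; abel
      rw [this, smul_smul]
      norm_num
    have hmd2 : m - d = w := by
      rw [hm, hdd, ← smul_sub]
      have : u + w - (u - w) = (2:ℝ) • w := by
        rw [two_smul]; abel
      rw [this, smul_smul]
      norm_num
    obtain ⟨n, hn⟩ := exists_nat_gt (‖d‖ / δ)
    have hn0 : 0 < n := by
      by_contra hc
      push_neg at hc
      interval_cases n
      · simp at hn
        have : 0 ≤ ‖d‖/δ := div_nonneg (norm_nonneg _) hδ.le
        linarith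
    have hnR : (0:ℝ) < n := by exact_mod_cast hn0
    have hstep : ‖(1/(n:ℝ)) • d‖ ≤ δ := by
      rw [norm_smul, Real.norm_eq_abs, abs_of_pos (by positivity)]
      rw [div_lt_iff₀ hδ] at hn
      rw [one_div]
      rw [inv_mul_le_iff₀ hnR]
      nlinarith
    set F : ℕ → E := fun j => f (m + ((j:ℝ)/n) • d) - f (m - (((n:ℝ)-j)/n) • d) with hF
    have hjstep : ∀ j : ℕ, F (j+1) = F j := by
      intro j
      have e1 : (m + (((j:ℝ)+1)/n) • d) - (m + ((j:ℝ)/n) • d) = ((1:ℝ)/n) • d := by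
        rw [add_sub_add_left_eq_sub, ← sub_smul, div_sub_div_same]
        congr 1
        ring
      have e2 : (m - (((n:ℝ)-((j:ℝ)+1))/n) • d) - (m - (((n:ℝ)-(j:ℝ))/n) • d)
          = ((1:ℝ)/n) • d := by
        rw [sub_sub_sub_cancel_left, ← sub_smul, div_sub_div_same]
        congr 1
        ring
      have := key (m + (((j:ℝ)+1)/n) • d) (m - (((n:ℝ)-((j:ℝ)+1))/n) • d)
        (m + ((j:ℝ)/n) • d) (m - (((n:ℝ)-(j:ℝ))/n) • d)
        (by rw [e1, e2]) (by rw [e1]; exact hstep)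
      have hcast : ((j+1 : ℕ) : ℝ) = (j:ℝ) + 1 := by push_cast; ring
      simp only [hF, hcast]
      exact sub_eq_sub_iff_sub_eq_sub.mpr this
    have hFall : ∀ j : ℕ, F j = F 0 := by
      intro j
      induction j with
      | zero => rfl
      | succ k ih => rw [hjstep k, ih]
    have hFn' : f (m + d) - f m = f m - f (m - d) := by
      have z3 : ((n:ℕ):ℝ)/((n:ℕ):ℝ) = 1 := div_self (ne_of_gt hnR)
      have hFn := hFall n
      simp only [hF, Nat.cast_zero, zero_div, sub_zero, sub_self, zero_smul, add_zero,
        z3, one_smul] at hFn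
      exact hFn
    rw [hmd1, hmd2] at hFn'
    have hsum : f u + f w = f m + f m := by
      rw [sub_eq_sub_iff_add_eq_add] at hFn'
      exact hFn'
    have : f m = (1/2:ℝ) • (f u + f w) := by
      rw [hsum, ← two_smul ℝ (f m), smul_smul]
      norm_num
    rw [this, smul_add]
  refine ⟨mid, ?_⟩
  intro u w
  have h1 := mid (u + w) 0
  have h2 := mid u w
  rw [add_zero, h2] at h1
  have h3 : f (u + w) + f 0 = f u + f w := by
    have h5 := congrArg (fun z => (2:ℝ) • z) h1
    simp only [smul_add, smul_smul] at h5
    norm_num at h5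
    exact h5.symm
  have h4 : f (u + w) = f u + f w - f 0 := by
    rw [eq_sub_iff_add_eq, h3]
  rw [h4]
  abel
end

section
/- Let 1 ≤ p ≤ q < ∞ and let f : E → E be such that φ(u) := f(u) − f(0) is a continuous ℝ-linear map on the normed space E. Then the composition operator C_f maps bv_p(E) into bv_q(E) and is Lipschitz continuous: there exists L ≥ 0 such that ‖C_f(x)−C_f(y)‖_{bv_q} ≤ L‖x−y‖_{bv_p} for all x, y ∈ bv_p(E). -/
/-- ℓp monotonicity. -/
lemma key_lp (a : ℕ → ℝ) (ha : ∀ n, 0 ≤ a n) (p q : ℝ) (hp : 0 < p) (hpq : p ≤ q)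
    (hs : Summable fun n => a n ^ p) :
    (Summable fun n => a n ^ q) ∧
      (∑' n, a n ^ q) ^ (1 / q) ≤ (∑' n, a n ^ p) ^ (1 / p) := by
  have hq : 0 < q := lt_of_lt_of_le hp hpq
  set S : ℝ := (∑' n, a n ^ p) ^ (1 / p) with hS
  have htp : ∀ n, 0 ≤ a n ^ p := fun n => Real.rpow_nonneg (ha n) p
  have hts : 0 ≤ ∑' n, a n ^ p := tsum_nonneg htp
  have hS0 : 0 ≤ S := Real.rpow_nonneg hts _
  have hSp : S ^ p = ∑' n, a n ^ p := by
    rw [hS, ← Real.rpow_mul hts, one_div_mul_cancel hp.ne', Real.rpow_one]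
  have haS : ∀ n, a n ≤ S := by
    intro n
    have h1 : a n ^ p ≤ S ^ p := by rw [hSp]; exact Summable.le_tsum hs n (fun m _ => htp m)
    have := Real.rpow_le_rpow (Real.rpow_nonneg (ha n) p) h1 (le_of_lt (by positivity : (0:ℝ) < 1/p))
    rwa [← Real.rpow_mul (ha n), mul_one_div_cancel hp.ne', Real.rpow_one,
      ← Real.rpow_mul hS0, mul_one_div_cancel hp.ne', Real.rpow_one] at this
  have hbound : ∀ n, a n ^ q ≤ a n ^ p * S ^ (q - p) := by
    intro n
    have : a n ^ q = a n ^ p * a n ^ (q - p) := by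
      rw [← Real.rpow_add' (ha n)] <;> ring_nf
      exact hq.ne'
    rw [this]
    exact mul_le_mul_of_nonneg_left
      (Real.rpow_le_rpow (ha n) (haS n) (by linarith)) (htp n)
  have hsq : Summable fun n => a n ^ q := by
    apply Summable.of_nonneg_of_le (fun n => Real.rpow_nonneg (ha n) q) hbound
    exact hs.mul_right _
  refine ⟨hsq, ?_⟩
  have h2 : ∑' n, a n ^ q ≤ S ^ q := by
    calc ∑' n, a n ^ q ≤ ∑' n, a n ^ p * S ^ (q - p) :=
          Summable.tsum_le_tsum hbound hsq (hs.mul_right _)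
      _ = (∑' n, a n ^ p) * S ^ (q - p) := tsum_mul_right
      _ = S ^ p * S ^ (q - p) := by rw [hSp]
      _ = S ^ q := by rw [← Real.rpow_add' hS0 (by ring_nf; exact hq.ne')]; ring_nf
  calc (∑' n, a n ^ q) ^ (1 / q) ≤ (S ^ q) ^ (1/q) :=
        Real.rpow_le_rpow (tsum_nonneg fun n => Real.rpow_nonneg (ha n) q) h2 (by positivity)
    _ = S := by rw [← Real.rpow_mul hS0, mul_one_div_cancel hq.ne', Real.rpow_one]

lemma add_rpow_le (a b p : ℝ) (ha : 0 ≤ a) (hb : 0 ≤ b) (hp : 0 ≤ p) :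
    (a + b) ^ p ≤ 2 ^ p * (a ^ p + b ^ p) := by
  have h1 : a + b ≤ 2 * max a b := by
    rcases max_cases a b with ⟨h, h'⟩ | ⟨h, h'⟩ <;> rw [h] <;> linarith
  calc (a + b) ^ p ≤ (2 * max a b) ^ p :=
        Real.rpow_le_rpow (by positivity) h1 hp
    _ = 2 ^ p * (max a b) ^ p := Real.mul_rpow (by norm_num) (le_max_of_le_left ha)
    _ ≤ 2 ^ p * (a ^ p + b ^ p) := by
        apply mul_le_mul_of_nonneg_left _ (by positivity)
        rcases max_cases a b with ⟨h, _⟩ | ⟨h, _⟩ <;> rw [h] <;>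
          [linarith [Real.rpow_nonneg hb p]; linarith [Real.rpow_nonneg ha p]]

theorem stmt11 {E : Type*} [NormedAddCommGroup E] [NormedSpace ℝ E]
    (p q : ℝ) (hp : 1 ≤ p) (hpq : p ≤ q) (f : E → E)
    (hcont : Continuous fun u => f u - f 0)
    (hadd : ∀ u w : E, f (u + w) - f 0 = (f u - f 0) + (f w - f 0))
    (hhom : ∀ (t : ℝ) (u : E), f (t • u) - f 0 = t • (f u - f 0)) :
    (∀ x : ℕ → E, memBV p x → memBV q (fun n => f (x n))) ∧
    ∃ L ≥ (0 : ℝ), ∀ x y : ℕ → E, memBV p x → memBV p y →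
      bvNorm q (fun n => f (x n) - f (y n)) ≤ L * bvNorm p (fun n => x n - y n) := by
  have hp0 : (0:ℝ) < p := lt_of_lt_of_le one_pos hp
  have hq0 : (0:ℝ) < q := lt_of_lt_of_le hp0 hpq
  set φ : E →L[ℝ] E := ⟨IsLinearMap.mk' (fun u => f u - f 0) ⟨hadd, hhom⟩, hcont⟩ with hφ
  have hφval : ∀ u, φ u = f u - f 0 := fun u => rfl
  set C : ℝ := ‖φ‖ with hC
  have hC0 : 0 ≤ C := norm_nonneg φ
  have hdiff : ∀ a b : E, f a - f b = φ (a - b) := by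
    intro a b
    rw [map_sub, hφval, hφval]; abel
  have hle : ∀ u : E, ‖φ u‖ ≤ C * ‖u‖ := fun u => φ.le_opNorm u
  constructor
  · intro x hx
    have hkey := key_lp (fun n => ‖x (n+1) - x n‖) (fun n => norm_nonneg _) p q hp0 hpq hx
    unfold memBV
    refine (hkey.1.mul_left (C ^ q)).of_nonneg_of_le
      (fun n => Real.rpow_nonneg (norm_nonneg _) q) (fun n => ?_)
    simp only
    rw [← Real.mul_rpow hC0 (norm_nonneg _)]
    apply Real.rpow_le_rpow (norm_nonneg _) _ hq0.le
    rw [hdiff]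
    exact hle _
  · refine ⟨C, hC0, fun x y hx hy => ?_⟩
    set z : ℕ → E := fun n => x n - y n with hz
    set a : ℕ → ℝ := fun n => ‖z (n+1) - z n‖ with ha
    have hap : Summable fun n => a n ^ p := by
      refine ((hx.add hy).mul_left ((2:ℝ) ^ p)).of_nonneg_of_le
        (fun n => Real.rpow_nonneg (norm_nonneg _) p) (fun n => ?_)
      · have h1 : a n ≤ ‖x (n+1) - x n‖ + ‖y (n+1) - y n‖ := by
          have : z (n+1) - z n = (x (n+1) - x n) - (y (n+1) - y n) := by
            simp only [hz]; abel
          rw [ha]; simp only [this]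
          exact norm_sub_le _ _
        calc a n ^ p ≤ (‖x (n+1) - x n‖ + ‖y (n+1) - y n‖) ^ p :=
              Real.rpow_le_rpow (norm_nonneg _) h1 hp0.le
          _ ≤ _ := add_rpow_le _ _ _ (norm_nonneg _) (norm_nonneg _) hp0.le
    obtain ⟨haq, hlp⟩ := key_lp a (fun n => norm_nonneg _) p q hp0 hpq hap
    have hrw : ∀ n, f (x n) - f (y n) = φ (z n) := fun n => hdiff _ _
    have hd : ∀ n, (f (x (n+1)) - f (y (n+1))) - (f (x n) - f (y n)) = φ (z (n+1) - z n) := by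
      intro n; rw [hrw, hrw, ← map_sub]
    have hsum1 : Summable fun n => ‖φ (z (n+1) - z n)‖ ^ q := by
      refine (haq.mul_left (C ^ q)).of_nonneg_of_le
        (fun n => Real.rpow_nonneg (norm_nonneg _) q) (fun n => ?_)
      rw [← Real.mul_rpow hC0 (norm_nonneg _)]
      exact Real.rpow_le_rpow (norm_nonneg _) (hle _) hq0.le
    have hbv : bvNorm q (fun n => f (x n) - f (y n)) =
        ‖φ (z 0)‖ + (∑' n, ‖φ (z (n+1) - z n)‖ ^ q) ^ (1/q) := by
      unfold bvNorm
      beta_reduce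
      rw [hrw 0]
      congr 1
      refine congrArg (· ^ (1/q)) (tsum_congr fun n => ?_)
      rw [hd n]
    rw [hbv]
    have hstep : (∑' n, ‖φ (z (n+1) - z n)‖ ^ q) ^ (1/q) ≤ C * (∑' n, a n ^ p) ^ (1/p) := by
      have h1 : ∑' n, ‖φ (z (n+1) - z n)‖ ^ q ≤ C ^ q * ∑' n, a n ^ q := by
        rw [← tsum_mul_left]
        apply Summable.tsum_le_tsum _ hsum1 (haq.mul_left _)
        intro n
        rw [← Real.mul_rpow hC0 (norm_nonneg _)]
        exact Real.rpow_le_rpow (norm_nonneg _) (hle _) hq0.le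
      calc (∑' n, ‖φ (z (n+1) - z n)‖ ^ q) ^ (1/q)
          ≤ (C ^ q * ∑' n, a n ^ q) ^ (1/q) :=
            Real.rpow_le_rpow (tsum_nonneg fun n => Real.rpow_nonneg (norm_nonneg _) q) h1
              (by positivity)
        _ = C * (∑' n, a n ^ q) ^ (1/q) := by
            rw [Real.mul_rpow (by positivity) (tsum_nonneg fun n => Real.rpow_nonneg (norm_nonneg _) q),
              ← Real.rpow_mul hC0, mul_one_div_cancel hq0.ne', Real.rpow_one]
        _ ≤ C * (∑' n, a n ^ p) ^ (1/p) := mul_le_mul_of_nonneg_left hlp hC0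
    have h0 : ‖φ (z 0)‖ ≤ C * ‖z 0‖ := hle _
    unfold bvNorm
    calc ‖φ (z 0)‖ + (∑' n, ‖φ (z (n+1) - z n)‖ ^ q) ^ (1/q)
        ≤ C * ‖z 0‖ + C * (∑' n, a n ^ p) ^ (1/p) := add_le_add h0 hstep
      _ = C * (‖z 0‖ + (∑' n, ‖z (n+1) - z n‖ ^ p) ^ (1/p)) := by simp only [ha]; ring
end

section
/- Let 1 ≤ p ≤ q < ∞, let E be a normed space, and suppose the composition operator C_f : bv_p(E) → bv_q(E) is Hölder continuous with exponent α ∈ (0,1), i.e., there exists L ≥ 0 with ‖C_f(x)−C_f(y)‖_{bv_q} ≤ L‖x−y‖_{bv_p}^α for all x,y. If in addition φ(u) = f(u) − f(0) is ℝ-linear (which follows from uniform continuity), then f is constant. -/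
theorem stmt12 {E : Type*} [NormedAddCommGroup E] [NormedSpace ℝ E]
    (p q α L : ℝ) (hp : 1 ≤ p) (hpq : p ≤ q) (hα0 : 0 < α) (hα1 : α < 1) (hL : 0 ≤ L)
    (f : E → E)
    (hmaps : ∀ x : ℕ → E, memBV p x → memBV q (fun n => f (x n)))
    (hHolder : ∀ x y : ℕ → E, memBV p x → memBV p y →
      bvNorm q (fun n => f (x n) - f (y n)) ≤ L * bvNorm p (fun n => x n - y n) ^ α)
    (hadd : ∀ u w : E, f (u + w) - f 0 = (f u - f 0) + (f w - f 0))
    (hhom : ∀ (t : ℝ) (u : E), f (t • u) - f 0 = t • (f u - f 0)) :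
    ∀ u : E, f u = f 0 := by
  intro u
  have hp0 : (0:ℝ) < p := lt_of_lt_of_le one_pos hp
  have hq0 : (0:ℝ) < q := lt_of_lt_of_le hp0 hpq
  have key : ∀ v : E, ‖f v - f 0‖ ≤ L * ‖v‖ ^ α := by
    intro v
    have hx : memBV p (fun _ : ℕ => v) := by
      simpa [memBV, sub_self, norm_zero, Real.zero_rpow hp0.ne'] using summable_zero
    have hy : memBV p (fun _ : ℕ => (0:E)) := by
      simpa [memBV, sub_self, norm_zero, Real.zero_rpow hp0.ne'] using summable_zero
    have h := hHolder (fun _ => v) (fun _ => 0) hx hy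
    simpa [bvNorm, sub_self, norm_zero, Real.zero_rpow hp0.ne', Real.zero_rpow hq0.ne',
      Real.zero_rpow (inv_ne_zero hq0.ne'), Real.zero_rpow (inv_ne_zero hp0.ne'),
      tsum_zero, sub_zero] using h
  have hbound : ∀ t : ℝ, 1 ≤ t → ‖f u - f 0‖ ≤ L * ‖u‖ ^ α * t ^ (α - 1) := by
    intro t ht
    have ht0 : (0:ℝ) < t := lt_of_lt_of_le one_pos ht
    have h2 : ‖f (t • u) - f 0‖ ≤ L * ‖t • u‖ ^ α := key _
    rw [hhom t u, norm_smul, Real.norm_of_nonneg ht0.le, norm_smul,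
      Real.norm_of_nonneg ht0.le, Real.mul_rpow ht0.le (norm_nonneg u)] at h2
    have hle : ‖f u - f 0‖ ≤ L * (t ^ α * ‖u‖ ^ α) / t := by
      rw [le_div_iff₀ ht0]
      nlinarith [h2]
    calc ‖f u - f 0‖ ≤ L * (t ^ α * ‖u‖ ^ α) / t := hle
      _ = L * ‖u‖ ^ α * t ^ (α - 1) := by
          rw [Real.rpow_sub ht0, Real.rpow_one]; ring
  have htend : Filter.Tendsto (fun t : ℝ => L * ‖u‖ ^ α * t ^ (α - 1))
      Filter.atTop (nhds 0) := by
    have h1 : Filter.Tendsto (fun t : ℝ => t ^ (-(1 - α))) Filter.atTop (nhds 0) :=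
      tendsto_rpow_neg_atTop (by linarith)
    have h2 := h1.const_mul (L * ‖u‖ ^ α)
    rw [mul_zero] at h2
    convert h2 using 2 with t
    ring_nf
  have hle0 : ‖f u - f 0‖ ≤ 0 := by
    refine ge_of_tendsto htend ?_
    filter_upwards [Filter.eventually_ge_atTop 1] with t ht
    exact hbound t ht
  have : f u - f 0 = 0 := by
    have := le_antisymm hle0 (norm_nonneg _)
    simpa using this
  exact sub_eq_zero.mp this
end

section
/- Let E be a normed space, p ∈ (1,∞), and let f : E → E be such that f(u) ≠ f(0) for some u ∈ E, and C_f maps bv_p(E) into ℓ^∞(E). Then C_f is not continuous: there exist x ∈ bv_p(E) and a sequence (x_m) in bv_p(E) with ‖x−x_m‖_{bv_p} → 0 but ‖C_f(x)−C_f(x_m)‖_∞ ≥ ‖f(u)−f(0)‖ > 0 for all m. -/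
def Kf (n : ℕ) : ℕ := Nat.log 2 (n + 2)

noncomputable def gf (n : ℕ) : ℝ :=
  ((min (n + 2 - 2 ^ Kf n) (2 ^ Kf n - (n + 2 - 2 ^ Kf n)) : ℕ) : ℝ) / 2 ^ (Kf n - 1)

lemma Kf_pos (n : ℕ) : 1 ≤ Kf n :=
  (Nat.le_log_iff_pow_le one_lt_two (by omega)).mpr (by norm_num)

lemma pow_Kf_le (n : ℕ) : 2 ^ Kf n ≤ n + 2 := Nat.pow_log_le_self 2 (by omega)

lemma lt_pow_Kf (n : ℕ) : n + 2 < 2 ^ (Kf n + 1) := Nat.lt_pow_succ_log_self one_lt_two _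

lemma Kf_eq {n k : ℕ} (h1 : 2 ^ k ≤ n + 2) (h2 : n + 2 < 2 ^ (k + 1)) : Kf n = k :=
  Nat.log_eq_of_pow_le_of_lt_pow h1 h2

lemma gf_start (m : ℕ) : gf (2 ^ (m + 2) - 2) = 0 := by
  have h4 : 4 ≤ 2 ^ (m + 2) := by
    calc (4:ℕ) = 2 ^ 2 := by norm_num
    _ ≤ 2 ^ (m + 2) := Nat.pow_le_pow_right (by norm_num) (by omega)
  have hn : 2 ^ (m + 2) - 2 + 2 = 2 ^ (m + 2) := by omega
  have hK : Kf (2 ^ (m + 2) - 2) = m + 2 := by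
    apply Kf_eq <;> rw [hn]
    exact Nat.pow_lt_pow_right one_lt_two (by omega)
  rw [gf, hK, hn, Nat.sub_self]
  simp

lemma gf_peak (m : ℕ) : gf (3 * 2 ^ (m + 1) - 2) = 1 := by
  have h2 : (2:ℕ) ≤ 2 ^ (m + 1) := by
    calc (2:ℕ) = 2 ^ 1 := by norm_num
    _ ≤ 2 ^ (m + 1) := Nat.pow_le_pow_right (by norm_num) (by omega)
  have p2 : (2:ℕ) ^ (m + 2) = 2 * 2 ^ (m + 1) := by rw [pow_succ]; ring
  have p3 : (2:ℕ) ^ (m + 3) = 4 * 2 ^ (m + 1) := by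
    rw [show m + 3 = (m + 1) + 2 by omega, pow_add]; ring
  have hn : 3 * 2 ^ (m + 1) - 2 + 2 = 3 * 2 ^ (m + 1) := by omega
  have hK : Kf (3 * 2 ^ (m + 1) - 2) = m + 2 := by
    apply Kf_eq <;> rw [hn]
    · omega
    · rw [show m + 2 + 1 = m + 3 by omega]; omega
  have e1 : 3 * 2 ^ (m + 1) - 2 ^ (m + 2) = 2 ^ (m + 1) := by omega
  have e2 : 2 ^ (m + 2) - 2 ^ (m + 1) = 2 ^ (m + 1) := by omega
  rw [gf, hK, hn, e1, e2, min_self]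
  rw [show m + 2 - 1 = m + 1 from rfl]
  push_cast
  have : (2:ℝ) ^ (m + 1) ≠ 0 := by positivity
  field_simp

lemma gf_nonneg (n : ℕ) : 0 ≤ gf n := by unfold gf; positivity

lemma gf_step (n : ℕ) : |gf (n + 1) - gf n| ≤ 4 / (n + 2) := by
  set K := Kf n with hKdef
  have h1 : 2 ^ K ≤ n + 2 := pow_Kf_le n
  have h2 : n + 2 < 2 ^ (K + 1) := lt_pow_Kf n
  have hK1 : 1 ≤ K := Kf_pos n
  have hpow : (2:ℕ) ^ K = 2 * 2 ^ (K - 1) := by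
    conv_lhs => rw [show K = (K - 1) + 1 by omega]
    rw [pow_succ]; ring
  have hpowR : (2:ℝ) ^ K = 2 * 2 ^ (K - 1) := by exact_mod_cast congrArg (Nat.cast : ℕ → ℝ) hpow
  have hsucc : 2 ^ (K + 1) = 2 * 2 ^ K := by rw [pow_succ]; ring
  have hhalf : (1:ℝ) / 2 ^ (K - 1) = 2 / 2 ^ K := by
    rw [div_eq_div_iff (by positivity) (by positivity), hpowR]; ring
  have key : |gf (n + 1) - gf n| ≤ 2 / 2 ^ K := by
    by_cases hc : n + 3 < 2 ^ (K + 1)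
    · have hK' : Kf (n + 1) = K := Kf_eq (by omega) (by omega)
      have hi : n + 2 - 2 ^ K + 2 ≤ 2 ^ K := by omega
      set i := n + 2 - 2 ^ K with hidef
      have e1 : n + 1 + 2 - 2 ^ K = i + 1 := by omega
      rw [gf, gf, hK', e1, ← hKdef, ← hidef]
      rw [div_sub_div_same, abs_div, abs_of_pos (by positivity : (0:ℝ) < (2:ℝ) ^ (K-1))]
      have hnum : |((min (i + 1) (2 ^ K - (i + 1)) : ℕ) : ℝ) -
          ((min i (2 ^ K - i) : ℕ) : ℝ)| ≤ 1 := by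
        have c1 : ((min (i + 1) (2 ^ K - (i + 1)) : ℕ) : ℝ)
            = min ((i:ℝ) + 1) ((2:ℝ) ^ K - (i + 1)) := by
          rw [Nat.cast_min]
          congr 1
          · push_cast; ring
          · rw [Nat.cast_sub (by omega)]; push_cast; ring
        have c2 : ((min i (2 ^ K - i) : ℕ) : ℝ) = min (i:ℝ) ((2:ℝ) ^ K - i) := by
          rw [Nat.cast_min]
          congr 1
          rw [Nat.cast_sub (by omega)]; push_cast; ring
        rw [c1, c2]
        refine (abs_min_sub_min_le_max _ _ _ _).trans ?_
        have e3 : ((i:ℝ) + 1 - i) = 1 := by ring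
        have e4 : ((2:ℝ) ^ K - ((i:ℝ) + 1) - ((2:ℝ) ^ K - i)) = -1 := by ring
        rw [e3, e4]
        simp
      calc |((min (i + 1) (2 ^ K - (i + 1)) : ℕ) : ℝ) - ((min i (2 ^ K - i) : ℕ) : ℝ)|
            / (2:ℝ) ^ (K - 1) ≤ 1 / (2:ℝ) ^ (K - 1) := by gcongr
        _ = 2 / 2 ^ K := hhalf
    · have hn3 : n + 3 = 2 ^ (K + 1) := by omega
      have hK' : Kf (n + 1) = K + 1 := Kf_eq (by omega) (by rw [pow_succ 2 (K+1)]; omega)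
      have e1 : n + 1 + 2 - 2 ^ (K + 1) = 0 := by omega
      have hg1 : gf (n + 1) = 0 := by rw [gf, hK', e1]; simp
      have h2K : 2 ≤ 2 ^ K := by
        calc (2:ℕ) = 2 ^ 1 := by norm_num
        _ ≤ 2 ^ K := Nat.pow_le_pow_right (by norm_num) hK1
      have e2 : n + 2 - 2 ^ K = 2 ^ K - 1 := by omega
      have e3 : 2 ^ K - (2 ^ K - 1) = 1 := by omega
      have e4 : min (2 ^ K - 1) 1 = 1 := by omega
      have hg0 : gf n = 1 / 2 ^ (K - 1) := by
        rw [gf, ← hKdef, e2, e3, e4]; norm_num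
      rw [hg1, hg0, zero_sub, abs_neg, abs_of_nonneg (by positivity), hhalf]
  have hfin : (2:ℝ) / 2 ^ K ≤ 4 / (n + 2) := by
    rw [div_le_div_iff₀ (by positivity) (by positivity)]
    have hle : ((n:ℝ) + 2) ≤ 2 * 2 ^ K := by
      have h2' : (n:ℕ) + 2 ≤ 2 * 2 ^ K := by omega
      exact_mod_cast h2'
    nlinarith [hle]
  exact key.trans hfin

theorem stmt19 {E : Type*} [NormedAddCommGroup E] [NormedSpace ℝ E]
    (p : ℝ) (hp : 1 < p) (f : E → E) (u : E) (hu : f u ≠ f 0)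
    (hmaps : ∀ x : ℕ → E, (Summable fun n : ℕ => ‖x (n + 1) - x n‖ ^ p) →
      ∃ C : ℝ, ∀ n : ℕ, ‖f (x n)‖ ≤ C) :
    ∃ x : ℕ → E, (Summable fun n : ℕ => ‖x (n + 1) - x n‖ ^ p) ∧
      ∃ xm : ℕ → ℕ → E,
        (∀ m : ℕ, Summable fun n : ℕ => ‖xm m (n + 1) - xm m n‖ ^ p) ∧
        Filter.Tendsto (fun m => bvNorm p (fun n => x n - xm m n)) Filter.atTop (nhds 0) ∧
        ((0 : ℝ) < ‖f u - f 0‖ ∧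
          ∀ m : ℕ, ∃ n : ℕ, ‖f u - f 0‖ ≤ ‖f (x n) - f (xm m n)‖) := by
  classical
  have hp0 : 0 < p := by linarith
  set x : ℕ → E := fun n => gf n • u with hxdef
  set B : ℕ → ℕ := fun m => 2 ^ (m + 2) - 2 with hBdef
  set xm : ℕ → ℕ → E := fun m n => if n < B m then x n else 0 with hxmdef
  have hB4 : ∀ m, 4 ≤ 2 ^ (m + 2) := by
    intro m
    calc (4:ℕ) = 2 ^ 2 := by norm_num
    _ ≤ 2 ^ (m + 2) := Nat.pow_le_pow_right (by norm_num) (by omega)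
  have hB2 : ∀ m, 2 ≤ B m := fun m => by have := hB4 m; simp only [hBdef]; omega
  set b : ℕ → ℝ := fun n => ‖x (n + 1) - x n‖ ^ p with hbdef
  have hb_eq : ∀ n, ‖x (n + 1) - x n‖ = |gf (n + 1) - gf n| * ‖u‖ := by
    intro n
    rw [hxdef]
    simp only
    rw [← sub_smul, norm_smul, Real.norm_eq_abs]
  have hbnonneg : ∀ n, 0 ≤ b n := fun n => by
    simp only [hbdef]; positivity
  -- summability of b
  have hsum2 : Summable (fun n : ℕ => 1 / ((n : ℝ) + 2) ^ p) := by
    have h0 := Real.summable_one_div_nat_rpow.mpr hp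
    have h2 := (summable_nat_add_iff 2).mpr h0
    refine h2.congr fun n => ?_
    push_cast
    ring_nf
  have hbsum : Summable b := by
    have hg : Summable (fun n : ℕ => (4 * ‖u‖) ^ p * (1 / ((n : ℝ) + 2) ^ p)) :=
      hsum2.mul_left _
    refine Summable.of_nonneg_of_le hbnonneg (fun n => ?_) hg
    have hle : ‖x (n + 1) - x n‖ ≤ 4 * ‖u‖ / ((n : ℝ) + 2) := by
      rw [hb_eq n]
      calc |gf (n + 1) - gf n| * ‖u‖ ≤ (4 / ((n : ℝ) + 2)) * ‖u‖ := by
            gcongr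
            exact gf_step n
        _ = 4 * ‖u‖ / ((n : ℝ) + 2) := by ring
    calc b n ≤ (4 * ‖u‖ / ((n : ℝ) + 2)) ^ p :=
          Real.rpow_le_rpow (norm_nonneg _) hle hp0.le
      _ = (4 * ‖u‖) ^ p * (1 / ((n : ℝ) + 2) ^ p) := by
          rw [Real.div_rpow (by positivity) (by positivity)]
          rw [mul_one_div]
  refine ⟨x, hbsum, xm, ?_, ?_, ?_, ?_⟩
  · -- each xm m is in bv_p
    intro m
    refine summable_of_ne_finset_zero (s := Finset.range (B m + 1)) fun n hn => ?_
    rw [Finset.mem_range, not_lt] at hn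
    have h1 : xm m n = 0 := by simp only [hxmdef]; rw [if_neg (by omega)]
    have h2 : xm m (n + 1) = 0 := by simp only [hxmdef]; rw [if_neg (by omega)]
    rw [h1, h2, sub_zero, norm_zero, Real.zero_rpow (ne_of_gt hp0)]
  · -- tendsto
    set A : ℕ → ℕ → ℝ := fun m n => ‖(x (n + 1) - xm m (n + 1)) - (x n - xm m n)‖ ^ p
      with hAdef
    have hd : ∀ m n, x n - xm m n = if n < B m then 0 else x n := by
      intro m n
      by_cases h : n < B m <;> simp [hxmdef, h]
    have hAnonneg : ∀ m n, 0 ≤ A m n := fun m n => by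
      simp only [hAdef]; positivity
    have hxB : ∀ m, x (B m) = 0 := by
      intro m
      simp only [hxdef, hBdef]
      rw [gf_start m, zero_smul]
    have hA_le : ∀ m n, A m n ≤ b n := by
      intro m n
      by_cases h1 : n + 1 < B m
      · have := hd m n
        have h2 : n < B m := by omega
        simp only [hAdef]
        rw [hd m (n + 1), hd m n, if_pos h1, if_pos h2, sub_zero, norm_zero,
          Real.zero_rpow (ne_of_gt hp0)]
        exact hbnonneg n
      · by_cases h2 : n < B m
        · have hB : n + 1 = B m := by omega
          simp only [hAdef]
          rw [hd m (n + 1), hd m n, if_pos h2, if_neg (by omega), hB, hxB m, sub_zero,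
            norm_zero, Real.zero_rpow (ne_of_gt hp0)]
          exact hbnonneg n
        · simp only [hAdef, hbdef]
          rw [hd m (n + 1), hd m n, if_neg (by omega), if_neg h2]
    have hA_zero : ∀ m n, n < B m - 1 → A m n = 0 := by
      intro m n hn
      simp only [hAdef]
      rw [hd m (n + 1), hd m n, if_pos (by omega), if_pos (by omega), sub_zero, norm_zero,
        Real.zero_rpow (ne_of_gt hp0)]
    have hAsum : ∀ m, Summable (A m) :=
      fun m => Summable.of_nonneg_of_le (hAnonneg m) (hA_le m) hbsum
    have hT_le : ∀ m, (∑' n, A m n) ≤ ∑' k, b (k + (B m - 1)) := by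
      intro m
      have heq := Summable.sum_add_tsum_nat_add (f := A m) (B m - 1) (hAsum m)
      have hz : ∑ i ∈ Finset.range (B m - 1), A m i = 0 :=
        Finset.sum_eq_zero fun i hi => hA_zero m i (Finset.mem_range.mp hi)
      rw [← heq, hz, zero_add]
      exact Summable.tsum_le_tsum (fun k => hA_le m (k + (B m - 1)))
        ((summable_nat_add_iff _).mpr (hAsum m)) ((summable_nat_add_iff _).mpr hbsum)
    have hBtop : Filter.Tendsto (fun m => B m - 1) Filter.atTop Filter.atTop := by
      refine Filter.tendsto_atTop_mono (fun m => ?_) Filter.tendsto_id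
      have := Nat.lt_two_pow_self (n := m + 2)
      have := hB4 m
      simp only [hBdef, id]
      omega
    have htail : Filter.Tendsto (fun m => ∑' k, b (k + (B m - 1))) Filter.atTop (nhds 0) :=
      (tendsto_sum_nat_add b).comp hBtop
    have hT0 : Filter.Tendsto (fun m => ∑' n, A m n) Filter.atTop (nhds 0) :=
      squeeze_zero (fun m => tsum_nonneg (hAnonneg m)) hT_le htail
    have hbv : ∀ m, bvNorm p (fun n => x n - xm m n) = (∑' n, A m n) ^ (1 / p) := by
      intro m
      have h0 : x 0 - xm m 0 = 0 := by
        rw [hd m 0, if_pos (by have := hB2 m; omega)]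
      rw [bvNorm, h0, norm_zero, zero_add]
    rw [Filter.tendsto_congr hbv]
    have hc : ContinuousAt (fun t : ℝ => t ^ (1 / p)) 0 :=
      Real.continuousAt_rpow_const 0 (1 / p) (Or.inr (by positivity))
    have := hc.tendsto.comp hT0
    rwa [Real.zero_rpow (one_div_ne_zero (ne_of_gt hp0))] at this
  · exact norm_pos_iff.mpr (sub_ne_zero.mpr hu)
  · intro m
    refine ⟨3 * 2 ^ (m + 1) - 2, ?_⟩
    have hxn : x (3 * 2 ^ (m + 1) - 2) = u := by
      simp only [hxdef]
      rw [gf_peak m, one_smul]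
    have hxmn : xm m (3 * 2 ^ (m + 1) - 2) = 0 := by
      simp only [hxmdef, hBdef]
      rw [if_neg]
      have h1 : (2:ℕ) ^ (m + 2) = 2 * 2 ^ (m + 1) := by rw [pow_succ]; ring
      omega
    rw [hxn, hxmn]
end
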